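/- Let Λ be a ring, let {X_i}_{i∈I} be a family of Λ-modules each with local endomorphism ring, and let M be a Λ-module. Suppose f : ⊕_{i∈I} X_i → M is a split epimorphism with section g : M → ⊕_{i∈I} X_i, and suppose that for every i ∈ I the component f_i : X_i → M is not a split monomorphism. If α : N → ⊕_{i∈I} X_i is a kernel of f with retraction β (so that 1 = g∘f + α∘β on ⊕ X_i), then α∘β restricted to each X_i is an isomorphism, yielding a contradiction; hence some f_i : X_i → M is a split monomorphism. In particular, if M is a nonzero pure projective direct summand-closed module admitting a pure epimorphism from a direct sum of finitely generated indecomposable modules, then M has a finitely generated direct summand. -/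

import Mathlib

open DirectSum

/-!
STATEMENT 2: Let Λ be a ring, `{X i}_{i ∈ I}` a family of Λ-modules each with local
endomorphism ring, `M` a nonzero Λ-module and `f : ⨁ X i → M` a split epimorphism
with section `g`.  Then some component `f_i = f ∘ (inclusion of X i)` is a split
monomorphism, i.e. admits a retraction `r : M → X i`.
-/

section Aux

variable {Λ : Type} [Ring Λ] {I : Type} [DecidableEq I]
    {X : I → Type} [∀ i, AddCommGroup (X i)] [∀ i, Module Λ (X i)]
    [∀ i, IsLocalRing (Module.End Λ (X i))]
    {M : Type} [AddCommGroup M] [Module Λ M]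

private lemma locstep {R : Type} [Ring R] [IsLocalRing R] {a b : R}
    (h : a + b = 1) (ha : ¬ IsUnit a) : IsUnit b :=
  (IsLocalRing.isUnit_or_isUnit_of_add_one h).resolve_left ha

private lemma key_cancel {A B : Type} [AddCommGroup A] [AddCommGroup B]
    [Module Λ A] [Module Λ B] [IsLocalRing (Module.End Λ A)] [IsLocalRing (Module.End Λ B)]
    (a : A →ₗ[Λ] B) (b : B →ₗ[Λ] A) (hab : ∀ y, a (b y) = y) :
    ∀ t, b (a t) = t := by
  set q : Module.End Λ A := b ∘ₗ a with hq
  have hqq : q * q = q := by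
    ext t
    simp [hq, Module.End.mul_eq_comp, hab (a t)]
  have hsum : q + (1 - q) = 1 := by abel
  rcases IsLocalRing.isUnit_or_isUnit_of_add_one hsum with hu | hu
  · have hq1 : q = 1 := hu.mul_left_cancel (by rw [hqq, mul_one])
    intro t
    have ht : q t = t := by rw [hq1]; rfl
    simpa [hq] using ht
  · exfalso
    have ha0 : ∀ t, a ((1 - q) t) = 0 := by
      intro t
      simp [hq, LinearMap.sub_apply, map_sub, hab (a t)]
    have haz : ∀ t, a t = 0 := by
      intro t
      have h0 := ha0 ((↑hu.unit⁻¹ : Module.End Λ A) t)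
      have h1 : ((1 - q) * ↑hu.unit⁻¹ : Module.End Λ A) = 1 := hu.mul_val_inv
      have h2 : (1 - q) ((↑hu.unit⁻¹ : Module.End Λ A) t) = t := by
        have h3 := congrArg (fun (φ : Module.End Λ A) => φ t) h1
        simp only [Module.End.mul_apply, Module.End.one_apply] at h3
        exact h3
      rwa [h2] at h0
    have h01 : (1 : Module.End Λ B) = 0 := by
      ext y
      have hy := hab y
      rw [haz (b y)] at hy
      simpa using hy.symm
    exact one_ne_zero h01

private lemma aux :
    ∀ (n : ℕ) (f : (⨁ i, X i) →ₗ[Λ] M) (g : M →ₗ[Λ] (⨁ i, X i)),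
      f ∘ₗ g = LinearMap.id →
      (∀ (i : I) (r : M →ₗ[Λ] X i), ¬ IsUnit (r ∘ₗ (f ∘ₗ DirectSum.lof Λ I X i))) →
      ∀ (m : M), m ≠ 0 →
      ∀ (S : Finset I), (∀ j, j ∉ S → DirectSum.component Λ I X j (g m) = 0) →
      S.card ≤ n → False := by
  intro n
  induction n with
  | zero =>
    intro f g hsec hbad m hm S hsupp hcard
    have hS : S = ∅ := Finset.card_eq_zero.mp (Nat.le_zero.mp hcard)
    have hx : g m = 0 := DirectSum.ext_component Λ fun j => by
      simpa using hsupp j (by simp [hS])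
    apply hm
    have := congrArg (fun (φ : M →ₗ[Λ] M) => φ m) hsec
    simpa [hx] using this.symm
  | succ n ih =>
    intro f g hsec hbad m hm S hsupp hcard
    have hfg : ∀ m', f (g m') = m' := fun m' => by
      have := congrArg (fun (φ : M →ₗ[Λ] M) => φ m') hsec
      simpa using this
    have hx : g m ≠ 0 := fun h => hm (by rw [← hfg m, h, map_zero])
    obtain ⟨i, hi⟩ : ∃ i, DirectSum.component Λ I X i (g m) ≠ 0 := by
      by_contra h
      push_neg at h
      exact hx (DirectSum.ext_component Λ fun j => by simpa using h j)
    have hiS : i ∈ S := by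
      by_contra h
      exact hi (hsupp i h)
    set ι : X i →ₗ[Λ] ⨁ i, X i := DirectSum.lof Λ I X i with hι
    set π : (⨁ i, X i) →ₗ[Λ] X i := DirectSum.component Λ I X i with hπ
    set w : Module.End Λ (X i) := (π ∘ₗ g) ∘ₗ (f ∘ₗ ι) with hw
    have hwnu : ¬ IsUnit w := hbad i (π ∘ₗ g)
    have hvu : IsUnit (1 - w) := locstep (by abel) hwnu
    set c : Module.End Λ (X i) := ↑hvu.unit⁻¹ with hc
    have hc2 : ∀ t, c ((1 - w) t) = t := by
      intro t
      have h1 : (c * (1 - w) : Module.End Λ (X i)) = 1 := by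
        rw [hc]; exact hvu.val_inv_mul
      have h3 := congrArg (fun (φ : Module.End Λ (X i)) => φ t) h1
      simpa [Module.End.mul_apply] using h3
    set f' : (⨁ i, X i) →ₗ[Λ] M := f + (f ∘ₗ ι) ∘ₗ (c ∘ₗ (π ∘ₗ (g ∘ₗ f))) with hf'
    set g' : M →ₗ[Λ] (⨁ i, X i) := g - ι ∘ₗ (π ∘ₗ g) with hg'
    have hwapp : ∀ t, w t = π (g (f (ι t))) := by
      intro t; rw [hw]; rfl
    have hsec' : f' ∘ₗ g' = LinearMap.id := by
      ext m₀
      have e2 : f (g m₀ - ι (π (g m₀))) = m₀ - f (ι (π (g m₀))) := by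
        rw [map_sub, hfg]
      simp only [hf', hg', LinearMap.comp_apply, LinearMap.add_apply, LinearMap.sub_apply,
        LinearMap.id_apply]
      rw [e2]
      simp only [map_sub]
      rw [← hwapp]
      have e5 : π (g m₀) - w (π (g m₀)) = (1 - w) (π (g m₀)) := by
        simp [LinearMap.sub_apply]
      have e7 : f (ι (c (π (g m₀)))) - f (ι (c (w (π (g m₀))))) = f (ι (π (g m₀))) := by
        rw [← map_sub, ← map_sub, ← map_sub, e5, hc2]
      rw [e7]
      abel
    have hbad' : ∀ (j : I) (r : M →ₗ[Λ] X j),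
        ¬ IsUnit (r ∘ₗ (f' ∘ₗ DirectSum.lof Λ I X j)) := by
      intro j r hU
      set d : X j →ₗ[Λ] X i := c ∘ₗ (π ∘ₗ ((g ∘ₗ f) ∘ₗ DirectSum.lof Λ I X j)) with hd
      set a1 : Module.End Λ (X j) := r ∘ₗ (f ∘ₗ DirectSum.lof Λ I X j) with ha1
      set a2 : Module.End Λ (X j) := (r ∘ₗ (f ∘ₗ ι)) ∘ₗ d with ha2
      have hsum : r ∘ₗ (f' ∘ₗ DirectSum.lof Λ I X j) = a1 + a2 := by
        ext t
        simp only [hf', ha1, ha2, hd, LinearMap.comp_apply, LinearMap.add_apply, map_add]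
      rw [hsum] at hU
      have ha1nu : ¬ IsUnit a1 := hbad j r
      obtain ⟨u, huu⟩ := hU
      have h1 : (↑u⁻¹ * a1 : Module.End Λ (X j)) + ↑u⁻¹ * a2 = 1 := by
        rw [← mul_add, ← huu]; exact u.inv_mul
      have hnu1 : ¬ IsUnit (↑u⁻¹ * a1 : Module.End Λ (X j)) := by
        intro h
        apply ha1nu
        have h4 : a1 = ↑u * (↑u⁻¹ * a1 : Module.End Λ (X j)) := by
          rw [← mul_assoc, u.mul_inv, one_mul]
        rw [h4]
        exact u.isUnit.mul h
      have ha2u : IsUnit a2 := by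
        have h2 := locstep h1 hnu1
        have h4 : a2 = ↑u * (↑u⁻¹ * a2 : Module.End Λ (X j)) := by
          rw [← mul_assoc, u.mul_inv, one_mul]
        rw [h4]
        exact u.isUnit.mul h2
      obtain ⟨s, hs⟩ := ha2u
      set a : X i →ₗ[Λ] X j := (↑s⁻¹ : Module.End Λ (X j)) ∘ₗ (r ∘ₗ (f ∘ₗ ι)) with ha
      have hab : ∀ y, a (d y) = y := by
        intro y
        have h3 : (↑s⁻¹ * a2 : Module.End Λ (X j)) = 1 := by
          rw [← hs]; exact s.inv_mul
        have h5 := congrArg (fun (φ : Module.End Λ (X j)) => φ y) h3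
        simpa [ha, ha2, Module.End.mul_apply] using h5
      have hba : ∀ t, d (a t) = t := key_cancel a d hab
      refine hbad i ((d ∘ₗ (↑s⁻¹ : Module.End Λ (X j))) ∘ₗ r) ?_
      have h9 : ((d ∘ₗ (↑s⁻¹ : Module.End Λ (X j))) ∘ₗ r) ∘ₗ (f ∘ₗ DirectSum.lof Λ I X i)
          = 1 := by
        ext t
        simpa [ha, hι] using hba t
      rw [h9]
      exact isUnit_one
    refine ih f' g' hsec' hbad' m hm (S.erase i) ?_ ?_
    · intro j hj
      have e1 : g' m = g m - ι (π (g m)) := by simp [hg']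
      rw [e1, map_sub]
      by_cases heq : j = i
      · subst heq
        simp [hι, hπ]
      · have hj' : j ∉ S := fun hjS => hj (Finset.mem_erase.mpr ⟨heq, hjS⟩)
        rw [hsupp j hj']
        rw [hι, DirectSum.component.of, dif_neg (fun h => heq h.symm)]
        simp
    · have := Finset.card_erase_of_mem hiS
      omega

end Aux

theorem stmt2 (Λ : Type) [Ring Λ] (I : Type) [DecidableEq I]
    (X : I → Type) [∀ i, AddCommGroup (X i)] [∀ i, Module Λ (X i)]
    [∀ i, IsLocalRing (Module.End Λ (X i))]
    (M : Type) [AddCommGroup M] [Module Λ M] [Nontrivial M]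
    (f : (⨁ i, X i) →ₗ[Λ] M) (g : M →ₗ[Λ] (⨁ i, X i))
    (hsec : f ∘ₗ g = LinearMap.id) :
    ∃ (i : I) (r : M →ₗ[Λ] X i),
      r ∘ₗ (f ∘ₗ DirectSum.lof Λ I X i) = LinearMap.id := by
  by_contra h
  push_neg at h
  have hbad : ∀ (i : I) (r : M →ₗ[Λ] X i),
      ¬ IsUnit (r ∘ₗ (f ∘ₗ DirectSum.lof Λ I X i)) := by
    intro i r hu
    refine h i ((↑hu.unit⁻¹ : Module.End Λ (X i)) ∘ₗ r) ?_
    rw [LinearMap.comp_assoc]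
    have h1 : (↑hu.unit⁻¹ : Module.End Λ (X i)) ∘ₗ (r ∘ₗ (f ∘ₗ DirectSum.lof Λ I X i)) = 1 :=
      hu.val_inv_mul
    rw [h1]
    rfl
  obtain ⟨m, hm⟩ := exists_ne (0 : M)
  classical
  refine aux (DFinsupp.support (g m)).card f g hsec hbad m hm
    (DFinsupp.support (g m)) ?_ le_rfl
  intro j hj
  exact DFinsupp.notMem_support_iff.mp hj
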